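/- A tangent vector ξ ∈ T_xM belongs to the viscosity subdifferential D⁻f(x) if and only if liminf_{v → 0} [ (f∘exp_x)(v) − f(x) − ⟨ξ, v⟩_x ] / ‖v‖ ≥ 0. -/

import Mathlib

open scoped Topology RealInnerProductSpace
open Filter MeasureTheory intervalIntegral

theorem viscosity_exists_support {E : Type*} [NormedAddCommGroup E] [InnerProductSpace ℝ E]
    (ρ : ℝ → ℝ) (hmono : Monotone ρ) (hnn : ∀ t, 0 ≤ ρ t)
    (hsmall : ∀ ε > 0, ∃ δ > 0, ∀ t, 0 ≤ t → t ≤ δ → ρ t ≤ ε * t) :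
    ∃ Φ : E → ℝ, ContDiff ℝ 1 Φ ∧ Φ 0 = 0 ∧ fderiv ℝ Φ 0 = 0 ∧ ∀ v : E, ρ ‖v‖ ≤ Φ v := by
  have hρint : ∀ a b : ℝ, IntervalIntegrable ρ volume a b := fun a b => hmono.intervalIntegrable
  set F : ℝ → ℝ := fun u => ∫ s in (0:ℝ)..u, ρ s with hFdef
  have hFc : Continuous F := intervalIntegral.continuous_primitive hρint 0
  set ψ : ℝ → ℝ := fun t => t⁻¹ * (F (2*t) - F t) with hψdef
  have hψ_eq : ∀ t : ℝ, ψ t = t⁻¹ * ∫ s in t..(2*t), ρ s := by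
    intro t
    rw [hψdef]
    simp only [hFdef]
    rw [intervalIntegral.integral_interval_sub_left (hρint 0 (2*t)) (hρint 0 t)]
  have hψc : ∀ t : ℝ, t ≠ 0 → ContinuousAt ψ t := by
    intro t ht
    exact (continuousAt_inv₀ ht).mul
      (((hFc.comp (continuous_const.mul continuous_id)).sub hFc).continuousAt)
  have hψ_lb : ∀ t : ℝ, 0 < t → ρ t ≤ ψ t := by
    intro t ht
    rw [hψ_eq]
    have h1 : t * ρ t ≤ ∫ s in t..(2*t), ρ s := by
      have hc : ∫ _s in t..(2*t), ρ t = (2*t - t) • ρ t := intervalIntegral.integral_const _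
      have hm : ∫ _s in t..(2*t), ρ t ≤ ∫ s in t..(2*t), ρ s :=
        intervalIntegral.integral_mono_on (by linarith) intervalIntegrable_const (hρint _ _)
          (fun s hs => hmono hs.1)
      rw [hc] at hm
      simpa [smul_eq_mul] using le_trans (by ring_nf; exact le_rfl) hm
    calc ρ t = t⁻¹ * (t * ρ t) := by field_simp
    _ ≤ t⁻¹ * ∫ s in t..(2*t), ρ s := by
        exact mul_le_mul_of_nonneg_left h1 (by positivity)
  have hψ_ub : ∀ t : ℝ, 0 < t → ψ t ≤ ρ (2*t) := by
    intro t ht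
    rw [hψ_eq]
    have h1 : ∫ s in t..(2*t), ρ s ≤ t * ρ (2*t) := by
      have hc : ∫ _s in t..(2*t), ρ (2*t) = (2*t - t) • ρ (2*t) := intervalIntegral.integral_const _
      have hm : ∫ s in t..(2*t), ρ s ≤ ∫ _s in t..(2*t), ρ (2*t) :=
        intervalIntegral.integral_mono_on (by linarith) (hρint _ _) intervalIntegrable_const
          (fun s hs => hmono hs.2)
      rw [hc] at hm
      calc ∫ s in t..(2*t), ρ s ≤ (2*t - t) • ρ (2*t) := hm
      _ = t * ρ (2*t) := by rw [smul_eq_mul]; ring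
    calc t⁻¹ * ∫ s in t..(2*t), ρ s ≤ t⁻¹ * (t * ρ (2*t)) :=
          mul_le_mul_of_nonneg_left h1 (by positivity)
    _ = ρ (2*t) := by field_simp
  have hψnn : ∀ t : ℝ, 0 < t → 0 ≤ ψ t := fun t ht => (hnn t).trans (hψ_lb t ht)
  have hψint : ∀ a b : ℝ, 0 < a → 0 < b → IntervalIntegrable ψ volume a b := by
    intro a b ha hb
    apply ContinuousOn.intervalIntegrable
    intro t ht
    have h0 : (0:ℝ) < t := lt_of_lt_of_le (lt_min ha hb) ht.1
    exact (hψc t h0.ne').continuousWithinAt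
  set ψ₂ : ℝ → ℝ := fun t => t⁻¹ * ∫ s in t..(2*t), ψ s with hψ₂def
  have hψ₂0 : ψ₂ 0 = 0 := by simp [hψ₂def]
  have hψ₂_lb : ∀ t : ℝ, 0 < t → ρ t ≤ ψ₂ t := by
    intro t ht
    have h1 : t * ρ t ≤ ∫ s in t..(2*t), ψ s := by
      have hc : ∫ _s in t..(2*t), ρ t = (2*t - t) • ρ t := intervalIntegral.integral_const _
      have hm : ∫ _s in t..(2*t), ρ t ≤ ∫ s in t..(2*t), ψ s := by
        apply intervalIntegral.integral_mono_on (by linarith) intervalIntegrable_const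
          (hψint t (2*t) ht (by linarith))
        intro s hs
        have hst : 0 < s := lt_of_lt_of_le ht hs.1
        exact le_trans (hmono hs.1) (hψ_lb s hst)
      rw [hc] at hm
      calc t * ρ t = (2*t - t) • ρ t := by rw [smul_eq_mul]; ring
      _ ≤ _ := hm
    calc ρ t = t⁻¹ * (t * ρ t) := by field_simp
    _ ≤ ψ₂ t := mul_le_mul_of_nonneg_left h1 (by positivity)
  have hψ₂_ub : ∀ t : ℝ, 0 < t → ψ₂ t ≤ ρ (4*t) := by
    intro t ht
    have h1 : ∫ s in t..(2*t), ψ s ≤ t * ρ (4*t) := by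
      have hc : ∫ _s in t..(2*t), ρ (4*t) = (2*t - t) • ρ (4*t) := intervalIntegral.integral_const _
      have hm : ∫ s in t..(2*t), ψ s ≤ ∫ _s in t..(2*t), ρ (4*t) := by
        apply intervalIntegral.integral_mono_on (by linarith)
          (hψint t (2*t) ht (by linarith)) intervalIntegrable_const
        intro s hs
        have hst : 0 < s := lt_of_lt_of_le ht hs.1
        calc ψ s ≤ ρ (2*s) := hψ_ub s hst
        _ ≤ ρ (4*t) := hmono (by linarith [hs.2])
      rw [hc] at hm
      calc ∫ s in t..(2*t), ψ s ≤ (2*t - t) • ρ (4*t) := hm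
      _ = t * ρ (4*t) := by rw [smul_eq_mul]; ring
    calc ψ₂ t ≤ t⁻¹ * (t * ρ (4*t)) := mul_le_mul_of_nonneg_left h1 (by positivity)
    _ = ρ (4*t) := by field_simp
  have hψ₂nn : ∀ t : ℝ, 0 < t → 0 ≤ ψ₂ t := fun t ht => (hnn t).trans (hψ₂_lb t ht)
  -- the primitive of ψ
  set H : ℝ → ℝ := fun u => ∫ s in (1:ℝ)..u, ψ s with hHdef
  have hψmeas : ∀ u : ℝ, u ≠ 0 → StronglyMeasurableAtFilter ψ (𝓝 u) volume := by
    intro u hu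
    exact ContinuousAt.stronglyMeasurableAtFilter (isOpen_compl_singleton (x := (0:ℝ)))
      (fun t ht => hψc t ht) u hu
  have hHderiv : ∀ u : ℝ, 0 < u → HasDerivAt H (ψ u) u := by
    intro u hu
    exact intervalIntegral.integral_hasDerivAt_right (hψint 1 u one_pos hu)
      (hψmeas u hu.ne') (hψc u hu.ne')
  have hHsub : ∀ t : ℝ, 0 < t → ψ₂ t = t⁻¹ * (H (2*t) - H t) := by
    intro t ht
    rw [hψ₂def]
    simp only [hHdef]
    rw [intervalIntegral.integral_interval_sub_left (hψint 1 (2*t) one_pos (by linarith))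
      (hψint 1 t one_pos ht)]
  set D : ℝ → ℝ := fun t => -(t^2)⁻¹ * (H (2*t) - H t) + t⁻¹ * (ψ (2*t) * 2 - ψ t) with hDdef
  have hψ₂deriv : ∀ t : ℝ, 0 < t → HasDerivAt ψ₂ (D t) t := by
    intro t ht
    have h2t : (0:ℝ) < 2*t := by linarith
    have hH1 : HasDerivAt (fun u : ℝ => H (2*u)) (ψ (2*t) * 2) t := by
      have := (hHderiv (2*t) h2t).comp t (by simpa using (hasDerivAt_id t).const_mul (2:ℝ))
      exact this
    have hH2 : HasDerivAt (fun u : ℝ => H (2*u) - H u) (ψ (2*t) * 2 - ψ t) t :=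
      hH1.sub (hHderiv t ht)
    have hinv : HasDerivAt (fun u : ℝ => u⁻¹) (-(t^2)⁻¹) t := hasDerivAt_inv ht.ne'
    have hmul := hinv.mul hH2
    apply hmul.congr_of_eventuallyEq
    filter_upwards [eventually_gt_nhds ht] with u hu
    rw [hHsub u hu]
    rfl
  have hD_eq : ∀ t : ℝ, 0 < t → D t = t⁻¹ * (2 * ψ (2*t) - ψ t - ψ₂ t) := by
    intro t ht
    have h1 : H (2*t) - H t = t * ψ₂ t := by
      rw [hHsub t ht]
      field_simp
    rw [hDdef]
    simp only
    rw [h1]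
    field_simp
    ring
  have hDsmall : ∀ ε > 0, ∃ δ > 0, ∀ t : ℝ, 0 < t → t ≤ δ → |D t| < ε := by
    intro ε hε
    obtain ⟨δ', hδ', h'⟩ := hsmall (ε/32) (by positivity)
    refine ⟨δ'/4, by positivity, fun t ht htle => ?_⟩
    have h4t : ρ (4*t) ≤ ε/32 * (4*t) := h' (4*t) (by positivity) (by linarith)
    have hb1 : ψ (2*t) ≤ ρ (4*t) := by
      have := hψ_ub (2*t) (by linarith)
      calc ψ (2*t) ≤ ρ (2*(2*t)) := this
      _ = ρ (4*t) := by ring_nf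
    have hb2 : ψ t ≤ ρ (4*t) := le_trans (hψ_ub t ht) (hmono (by linarith))
    have hb3 : ψ₂ t ≤ ρ (4*t) := hψ₂_ub t ht
    have hn1 : 0 ≤ ψ (2*t) := hψnn _ (by linarith)
    have hn2 : 0 ≤ ψ t := hψnn _ ht
    have hn3 : 0 ≤ ψ₂ t := hψ₂nn _ ht
    rw [hD_eq t ht]
    have habs : |2 * ψ (2*t) - ψ t - ψ₂ t| ≤ 4 * ρ (4*t) := by
      rw [abs_le]
      constructor <;> nlinarith [hnn (4*t)]
    have htinv : (0:ℝ) < t⁻¹ := by positivity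
    calc |t⁻¹ * (2 * ψ (2*t) - ψ t - ψ₂ t)| = t⁻¹ * |2 * ψ (2*t) - ψ t - ψ₂ t| := by
          rw [abs_mul, abs_of_pos htinv]
    _ ≤ t⁻¹ * (4 * ρ (4*t)) := mul_le_mul_of_nonneg_left habs (le_of_lt htinv)
    _ ≤ t⁻¹ * (4 * (ε/32 * (4*t))) := by
          apply mul_le_mul_of_nonneg_left _ (le_of_lt htinv)
          nlinarith
    _ = ε/2 * (t * t⁻¹) := by ring
    _ = ε/2 := by rw [mul_inv_cancel₀ ht.ne', mul_one]
    _ < ε := by linarith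
  -- the function Φ
  set Φ : E → ℝ := fun v => ψ₂ ‖v‖ with hΦdef
  have hΦ0 : Φ 0 = 0 := by simp [hΦdef, hψ₂0]
  have hΦderiv : ∀ v : E, v ≠ 0 →
      HasFDerivAt Φ (D ‖v‖ • fderiv ℝ (fun w : E => ‖w‖) v) v := by
    intro v hv
    have hnv : (0:ℝ) < ‖v‖ := norm_pos_iff.2 hv
    have hn : DifferentiableAt ℝ (fun w : E => ‖w‖) v :=
      (contDiffAt_norm (𝕜 := ℝ) (E := E) hv (n := 1)).differentiableAt one_ne_zero
    exact (hψ₂deriv ‖v‖ hnv).comp_hasFDerivAt v hn.hasFDerivAt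
  have hΦ0deriv : HasFDerivAt Φ (0 : E →L[ℝ] ℝ) 0 := by
    rw [hasFDerivAt_iff_isLittleO_nhds_zero, Asymptotics.isLittleO_iff]
    intro c hc
    obtain ⟨δ, hδ, h'⟩ := hsmall (c/4) (by positivity)
    have hball : ∀ᶠ w : E in 𝓝 0, ‖w‖ < δ/4 := by
      have := Metric.ball_mem_nhds (0:E) (show (0:ℝ) < δ/4 by positivity)
      filter_upwards [this] with w hw
      simpa [dist_zero_right] using hw
    filter_upwards [hball] with w hw
    simp only [ContinuousLinearMap.zero_apply, zero_add, hΦ0, sub_zero]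
    rcases eq_or_ne w 0 with rfl | hw0
    · simp [hΦ0]
    · have hnw : (0:ℝ) < ‖w‖ := norm_pos_iff.2 hw0
      have h1 : Φ w ≤ ρ (4*‖w‖) := hψ₂_ub ‖w‖ hnw
      have h2 : ρ (4*‖w‖) ≤ c/4 * (4*‖w‖) := h' _ (by positivity) (by linarith)
      have h3 : 0 ≤ Φ w := hψ₂nn ‖w‖ hnw
      rw [Real.norm_eq_abs, abs_of_nonneg h3]
      nlinarith
  have hdiffΦ : Differentiable ℝ Φ := by
    intro v
    rcases eq_or_ne v 0 with rfl | hv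
    · exact hΦ0deriv.differentiableAt
    · exact (hΦderiv v hv).differentiableAt
  have hf0 : fderiv ℝ Φ 0 = 0 := hΦ0deriv.fderiv
  -- continuity of D on positives
  have hDc : ∀ t : ℝ, 0 < t → ContinuousAt D t := by
    intro t ht
    have hH1 : ContinuousAt H t := (hHderiv t ht).continuousAt
    have hH2 : ContinuousAt (fun u : ℝ => H (2*u)) t := by
      have : ContinuousAt H (2*t) := (hHderiv (2*t) (by linarith)).continuousAt
      exact this.comp ((continuous_const.mul continuous_id).continuousAt)
    have hψ1 : ContinuousAt ψ t := hψc t ht.ne'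
    have hψ2 : ContinuousAt (fun u : ℝ => ψ (2*u)) t := by
      have : ContinuousAt ψ (2*t) := hψc (2*t) (by positivity)
      exact this.comp ((continuous_const.mul continuous_id).continuousAt)
    apply ContinuousAt.add
    · exact (((continuous_pow 2).continuousAt.inv₀ (by positivity : (t:ℝ)^2 ≠ 0)).neg).mul
        (hH2.sub hH1)
    · exact (continuousAt_inv₀ ht.ne').mul ((hψ2.mul continuousAt_const).sub hψ1)
  have hψ₂cd : ∀ t : ℝ, 0 < t → ContDiffAt ℝ 1 ψ₂ t := by
    intro t ht
    rw [contDiffAt_one_iff]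
    refine ⟨fun u => ContinuousLinearMap.smulRight (1 : ℝ →L[ℝ] ℝ) (D u),
      Set.Ioi (0:ℝ), Ioi_mem_nhds ht, ?_, ?_⟩
    · exact ((ContinuousLinearMap.smulRightL ℝ ℝ ℝ (1 : ℝ →L[ℝ] ℝ)).continuous).comp_continuousOn
        (fun u hu => (hDc u hu).continuousWithinAt)
    · intro u hu
      exact (hasDerivAt_iff_hasFDerivAt.1 (hψ₂deriv u hu))
  have hΦcdOn : ContDiffOn ℝ 1 Φ {(0:E)}ᶜ := by
    intro v hv
    have hv0 : v ≠ 0 := by simpa using hv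
    have h1 : ContDiffAt ℝ 1 Φ v :=
      (hψ₂cd ‖v‖ (norm_pos_iff.2 hv0)).comp v (contDiffAt_norm (𝕜 := ℝ) hv0)
    exact h1.contDiffWithinAt
  have hcont : Continuous (fderiv ℝ Φ) := by
    rw [continuous_iff_continuousAt]
    intro v
    rcases eq_or_ne v 0 with rfl | hv
    · rw [ContinuousAt, hf0]
      rw [NormedAddCommGroup.tendsto_nhds_zero]
      intro ε hε
      obtain ⟨δ, hδ, hD'⟩ := hDsmall ε hε
      have hball : ∀ᶠ w : E in 𝓝 0, ‖w‖ < δ := by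
        have := Metric.ball_mem_nhds (0:E) hδ
        filter_upwards [this] with w hw
        simpa [dist_zero_right] using hw
      filter_upwards [hball] with w hw
      rcases eq_or_ne w 0 with rfl | hw0
      · simpa [hf0] using hε
      · rw [(hΦderiv w hw0).fderiv]
        have h1 : ‖fderiv ℝ (fun w : E => ‖w‖) w‖ ≤ 1 := by
          simpa using norm_fderiv_le_of_lipschitz ℝ (lipschitzWith_one_norm (E := E))
        have hnw : (0:ℝ) < ‖w‖ := norm_pos_iff.2 hw0
        calc ‖D ‖w‖ • fderiv ℝ (fun w : E => ‖w‖) w‖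
            = |D ‖w‖| * ‖fderiv ℝ (fun w : E => ‖w‖) w‖ := by
              rw [norm_smul, Real.norm_eq_abs]
        _ ≤ |D ‖w‖| * 1 := mul_le_mul_of_nonneg_left h1 (abs_nonneg _)
        _ = |D ‖w‖| := mul_one _
        _ < ε := hD' ‖w‖ hnw (le_of_lt hw)
    · have h1 := hΦcdOn.continuousOn_fderiv_of_isOpen isOpen_compl_singleton le_rfl
      exact h1.continuousAt (isOpen_compl_singleton.mem_nhds (by simpa using hv))
  refine ⟨Φ, contDiff_one_iff_fderiv.2 ⟨hdiffΦ, hcont⟩, hΦ0, hf0, ?_⟩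
  intro v
  rcases eq_or_ne v 0 with rfl | hv
  · have hρ0 : ρ 0 = 0 := by
      obtain ⟨δ, hδ, h'⟩ := hsmall 1 one_pos
      have := h' 0 le_rfl (le_of_lt hδ)
      simp only [mul_zero] at this
      exact le_antisymm this (hnn 0)
    simp [hΦ0, hρ0]
  · exact hψ₂_lb ‖v‖ (norm_pos_iff.2 hv)

/-- A vector `ξ` belongs to the viscosity subdifferential `D⁻f(x)` (i.e. `ξ` is the
differential at `x` of a `C¹` function `g` such that `f - g` has a local minimum at `x`)
if and only if `liminf_{v → 0} (f(exp_x v) − f(x) − ⟨ξ, v⟩)/‖v‖ ≥ 0`; here, in the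
(flat) Euclidean setting, `exp_x v = x + v`. -/
theorem mem_viscositySubdifferential_iff_liminf_nonneg
    {E : Type*} [NormedAddCommGroup E] [InnerProductSpace ℝ E] [FiniteDimensional ℝ E]
    (f : E → EReal) (hf : LowerSemicontinuous f) (hbot : ∀ y, f y ≠ ⊥)
    (x : E) (hdom : f x ≠ ⊤) (ξ : E) :
    (∃ g : E → ℝ, ContDiff ℝ 1 g ∧ (∀ v, fderiv ℝ g x v = ⟪ξ, v⟫) ∧
        IsLocalMin (fun y => f y - (g y : EReal)) x) ↔
      0 ≤ Filter.liminf
        (fun v : E => ((‖v‖⁻¹ : ℝ) : EReal) * (f (x + v) - f x - ((⟪ξ, v⟫ : ℝ) : EReal)))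
        (𝓝[≠] (0 : E)) := by
  set a : ℝ := (f x).toReal with ha
  have hfx : f x = (a : EReal) := (EReal.coe_toReal hdom (hbot x)).symm
  constructor
  · rintro ⟨g, hg, hgderiv, hmin⟩
    have key : ∀ r : ℝ, r < 0 → ∀ᶠ v in 𝓝[≠] (0:E),
        (r : EReal) ≤ ((‖v‖⁻¹ : ℝ) : EReal) * (f (x + v) - f x - ((⟪ξ, v⟫ : ℝ) : EReal)) := by
      intro r hr
      have hgd : HasFDerivAt g (innerSL ℝ ξ) x := by
        have h1 := (hg.differentiable one_ne_zero x).hasFDerivAt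
        have h2 : fderiv ℝ g x = innerSL ℝ ξ := by
          ext v; simpa using hgderiv v
        rwa [h2] at h1
      have htr : Filter.Tendsto (fun v : E => x + v) (𝓝 0) (𝓝 x) := by
        have : Filter.Tendsto (fun v : E => x + v) (𝓝 0) (𝓝 (x + 0)) :=
          (continuous_const.add continuous_id).tendsto (0:E)
        rwa [add_zero] at this
      have hlittle2 : (fun v : E => g (x + v) - g x - ⟪ξ, v⟫) =o[𝓝 (0:E)] (fun v => v) := by
        have h := hgd.isLittleO.comp_tendsto htr
        exact h.congr (fun v => by simp) (fun v => by simp)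
      have hev1 : ∀ᶠ v : E in 𝓝 0, |g (x + v) - g x - ⟪ξ, v⟫| ≤ (-r) * ‖v‖ := by
        have := hlittle2.def (show (0:ℝ) < -r by linarith)
        filter_upwards [this] with v hv
        simpa [Real.norm_eq_abs] using hv
      have hev2 : ∀ᶠ v : E in 𝓝 0, f x - (g x : EReal) ≤ f (x + v) - (g (x + v) : EReal) :=
        htr.eventually hmin
      rw [eventually_nhdsWithin_iff]
      filter_upwards [hev1, hev2] with v h1 h2 hv0
      have hv0' : v ≠ (0:E) := by simpa using hv0
      have hnv : (0:ℝ) < ‖v‖ := norm_pos_iff.2 hv0'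
      have hX : ((r * ‖v‖ : ℝ) : EReal) ≤ f (x + v) - f x - ((⟪ξ, v⟫:ℝ) : EReal) := by
        rcases eq_or_ne (f (x+v)) ⊤ with htop | htop
        · rw [htop, hfx]
          rw [EReal.top_sub_coe, EReal.top_sub_coe]
          exact le_top
        · have hb : f (x+v) = ((f (x+v)).toReal : EReal) := (EReal.coe_toReal htop (hbot _)).symm
          set b := (f (x+v)).toReal with hbdef
          rw [hb, hfx, ← EReal.coe_sub, ← EReal.coe_sub, EReal.coe_le_coe_iff]
          have h2' : a - g x ≤ b - g (x+v) := by
            rw [hfx, hb, ← EReal.coe_sub, ← EReal.coe_sub, EReal.coe_le_coe_iff] at h2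
            exact h2
          have habs := abs_le.1 h1
          nlinarith [habs.1]
      have hdiv : (r : EReal) ≤ (f (x + v) - f x - ((⟪ξ, v⟫:ℝ):EReal)) / ((‖v‖:ℝ):EReal) := by
        rw [EReal.le_div_iff_mul_le (EReal.coe_pos.2 hnv) (EReal.coe_ne_top _)]
        calc (r : EReal) * ((‖v‖:ℝ):EReal) = ((r * ‖v‖ : ℝ) : EReal) := (EReal.coe_mul _ _).symm
        _ ≤ _ := hX
      have hrw : ((‖v‖⁻¹:ℝ) : EReal) * (f (x + v) - f x - ((⟪ξ, v⟫:ℝ):EReal))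
          = (f (x + v) - f x - ((⟪ξ, v⟫:ℝ):EReal)) / ((‖v‖:ℝ):EReal) := by
        rw [EReal.coe_inv, EReal.mul_comm]
        rfl
      rw [hrw]
      exact hdiv
    by_contra hcon
    push_neg at hcon
    obtain ⟨c, hc1, hc2⟩ := EReal.exists_between_coe_real hcon
    have hcneg : c < 0 := EReal.coe_neg'.1 hc2
    have := Filter.le_liminf_of_le (by isBoundedDefault) (key c hcneg)
    exact absurd this (not_le.2 hc1)
  · intro hlim
    have hXbot : ∀ v : E, f (x + v) - f x - ((⟪ξ, v⟫ : ℝ) : EReal) ≠ ⊥ := by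
      intro v
      rw [hfx]
      rcases eq_or_ne (f (x+v)) ⊤ with htop | htop
      · rw [htop, EReal.top_sub_coe, EReal.top_sub_coe]; exact top_ne_bot
      · have hb : f (x+v) = ((f (x+v)).toReal : EReal) := (EReal.coe_toReal htop (hbot _)).symm
        rw [hb, ← EReal.coe_sub, ← EReal.coe_sub]
        exact EReal.coe_ne_bot _
    set w : E → ℝ := fun v => min 0 (f (x + v) - f x - ((⟪ξ, v⟫ : ℝ) : EReal)).toReal with hwdef
    have hw0 : w 0 = 0 := by
      have hX0 : f (x + 0) - f x - ((⟪ξ, (0:E)⟫ : ℝ) : EReal) = 0 := by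
        rw [add_zero, hfx, inner_zero_right]
        rw [← EReal.coe_sub, ← EReal.coe_sub]
        norm_num
      rw [hwdef]
      show min 0 (f (x + 0) - f x - ((⟪ξ, (0:E)⟫ : ℝ) : EReal)).toReal = 0
      rw [hX0]
      simp
    have hev : ∀ ε : ℝ, 0 < ε → ∀ᶠ v : E in 𝓝 0, -(ε * ‖v‖) ≤ w v := by
      intro ε hε
      have h1 : ((-ε : ℝ) : EReal) < Filter.liminf
          (fun v : E => ((‖v‖⁻¹ : ℝ) : EReal) * (f (x + v) - f x - ((⟪ξ, v⟫ : ℝ) : EReal)))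
          (𝓝[≠] (0 : E)) :=
        lt_of_lt_of_le (EReal.coe_neg'.2 (by linarith)) hlim
      have h2 := Filter.eventually_lt_of_lt_liminf h1
      rw [eventually_nhdsWithin_iff] at h2
      filter_upwards [h2] with v hv
      rcases eq_or_ne v (0:E) with rfl | hv0
      · simp [hw0]
      · have hv' := hv (by simpa using hv0)
        have hnv : (0:ℝ) < ‖v‖ := norm_pos_iff.2 hv0
        have hrw : ((‖v‖⁻¹:ℝ) : EReal) * (f (x + v) - f x - ((⟪ξ, v⟫:ℝ):EReal))
            = (f (x + v) - f x - ((⟪ξ, v⟫:ℝ):EReal)) / ((‖v‖:ℝ):EReal) := by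
          rw [EReal.coe_inv, EReal.mul_comm]
          rfl
        rw [hrw] at hv'
        have hmul : ((-ε : ℝ):EReal) * ((‖v‖:ℝ):EReal)
            ≤ f (x + v) - f x - ((⟪ξ, v⟫:ℝ):EReal) :=
          (EReal.le_div_iff_mul_le (EReal.coe_pos.2 hnv) (EReal.coe_ne_top _)).1 (le_of_lt hv')
        rw [← EReal.coe_mul] at hmul
        rcases eq_or_ne (f (x + v) - f x - ((⟪ξ, v⟫:ℝ):EReal)) ⊤ with htop | htop
        · rw [hwdef]
          simp only [htop]
          rw [EReal.toReal_top]
          simp only [min_self]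
          nlinarith [norm_nonneg v]
        · have h3 := EReal.toReal_le_toReal hmul (EReal.coe_ne_bot _) htop
          rw [EReal.toReal_coe] at h3
          rw [hwdef]
          refine le_min (by nlinarith [norm_nonneg v]) (by linarith)
    obtain ⟨δ₀, hδ₀, hw1⟩ : ∃ δ₀ > 0, ∀ v : E, ‖v‖ ≤ δ₀ → -w v ≤ ‖v‖ := by
      obtain ⟨δ, hδ, h⟩ := Metric.eventually_nhds_iff.1 (hev 1 one_pos)
      refine ⟨δ/2, by positivity, fun v hv => ?_⟩
      have := h (show dist v 0 < δ by rw [dist_zero_right]; linarith)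
      linarith
    set ρ : ℝ → ℝ := fun t => sSup ((fun v : E => -w v) '' Metric.closedBall 0 (min t δ₀)) with hρdef
    have hbdd : ∀ t, BddAbove ((fun v : E => -w v) '' Metric.closedBall (0:E) (min t δ₀)) := by
      intro t
      refine ⟨δ₀, ?_⟩
      rintro y ⟨v, hv, rfl⟩
      rw [Metric.mem_closedBall, dist_zero_right] at hv
      exact le_trans (hw1 v (le_trans hv (min_le_right _ _))) (le_trans hv (min_le_right _ _))
    have hρnn : ∀ t, 0 ≤ t → 0 ≤ ρ t := by
      intro t ht
      apply le_csSup (hbdd t)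
      refine ⟨0, ?_, by simp [hw0]⟩
      rw [Metric.mem_closedBall, dist_self]
      exact le_min ht (le_of_lt hδ₀)
    have hρneg : ∀ t : ℝ, t < 0 → ρ t = 0 := by
      intro t ht
      rw [hρdef]
      simp only
      rw [Metric.closedBall_eq_empty.2 (lt_of_le_of_lt (min_le_left _ _) ht)]
      simp [Real.sSup_empty]
    have hρnn' : ∀ t, 0 ≤ ρ t := by
      intro t
      rcases le_or_gt 0 t with ht | ht
      · exact hρnn t ht
      · rw [hρneg t ht]
    have hρmono : Monotone ρ := by
      intro s t hst
      rcases lt_or_ge s 0 with hs | hs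
      · rw [hρneg s hs]
        exact hρnn' t
      · apply csSup_le_csSup (hbdd t)
        · refine ⟨-w 0, 0, ?_, rfl⟩
          rw [Metric.mem_closedBall, dist_self]
          exact le_min hs (le_of_lt hδ₀)
        · apply Set.image_mono
          exact Metric.closedBall_subset_closedBall (min_le_min hst le_rfl)
    have hle : ∀ v : E, ‖v‖ ≤ δ₀ → -w v ≤ ρ ‖v‖ := by
      intro v hv
      apply le_csSup (hbdd _)
      refine ⟨v, ?_, rfl⟩
      rw [Metric.mem_closedBall, dist_zero_right]
      exact le_min le_rfl hv
    have hρsmall : ∀ ε > 0, ∃ δ > 0, ∀ t, 0 ≤ t → t ≤ δ → ρ t ≤ ε * t := by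
      intro ε hε
      obtain ⟨δ₁, hδ₁, h₁⟩ := Metric.eventually_nhds_iff.1 (hev ε hε)
      refine ⟨min (δ₁/2) δ₀, by positivity, fun t ht htle => ?_⟩
      apply Real.sSup_le _ (by positivity)
      rintro y ⟨v, hvmem, rfl⟩
      rw [Metric.mem_closedBall, dist_zero_right] at hvmem
      have hv1 : ‖v‖ ≤ t := le_trans hvmem (min_le_left _ _)
      have hvd : dist v 0 < δ₁ := by
        rw [dist_zero_right]
        have : t ≤ δ₁/2 := le_trans htle (min_le_left _ _)
        linarith
      have h2' := h₁ hvd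
      have hεt : ε * ‖v‖ ≤ ε * t := mul_le_mul_of_nonneg_left hv1 (le_of_lt hε)
      simp only
      linarith
    obtain ⟨Φ, hΦcd, hΦ0, hΦf0, hΦlb⟩ :=
      viscosity_exists_support (E := E) ρ hρmono hρnn' hρsmall
    set g : E → ℝ := fun y => a + (innerSL ℝ ξ) (y - x) - Φ (y - x) with hgdef
    have hsub : ContDiff ℝ 1 (fun y : E => y - x) := contDiff_id.sub contDiff_const
    have hgcd : ContDiff ℝ 1 g :=
      (contDiff_const.add ((innerSL ℝ ξ).contDiff.comp hsub)).sub (hΦcd.comp hsub)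
    have h1 : HasFDerivAt (fun y : E => y - x) (ContinuousLinearMap.id ℝ E) x :=
      (hasFDerivAt_id x).sub_const x
    have h2 : HasFDerivAt (fun y : E => (innerSL ℝ ξ) (y - x)) (innerSL ℝ ξ) x := by
      have := (innerSL ℝ ξ).hasFDerivAt.comp x h1
      simpa [Function.comp_def] using this
    have hΦat : HasFDerivAt Φ (0 : E →L[ℝ] ℝ) (x - x) := by
      rw [sub_self]
      have := (hΦcd.differentiable one_ne_zero 0).hasFDerivAt
      rwa [hΦf0] at this
    have h3 : HasFDerivAt (fun y : E => Φ (y - x)) (0 : E →L[ℝ] ℝ) x := by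
      have := HasFDerivAt.comp (g := Φ) (f := fun y : E => y - x) x hΦat h1
      simpa [Function.comp_def] using this
    have hgd : HasFDerivAt g (innerSL ℝ ξ) x := by
      have := ((hasFDerivAt_const a x).add h2).sub h3
      simp only [zero_add, sub_zero] at this
      exact this
    refine ⟨g, hgcd, ?_, ?_⟩
    · intro v
      rw [hgd.fderiv]
      simp
    · have hgx : g x = a := by
        rw [hgdef]
        simp [hΦ0]
      have hball : ∀ᶠ y : E in 𝓝 x, ‖y - x‖ ≤ δ₀ := by
        have := Metric.ball_mem_nhds x hδ₀
        filter_upwards [this] with y hy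
        rw [Metric.mem_ball, dist_eq_norm] at hy
        exact le_of_lt hy
      show ∀ᶠ y in 𝓝 x, f x - (g x : EReal) ≤ f y - (g y : EReal)
      filter_upwards [hball] with y hy
      rw [hgx, hfx]
      have hzero : (a : EReal) - (a:EReal) = 0 := by
        rw [← EReal.coe_sub]
        norm_num
      rw [hzero]
      rcases eq_or_ne (f y) ⊤ with htop | htop
      · rw [htop, EReal.top_sub_coe]
        exact le_top
      · have hb : f y = ((f y).toReal : EReal) := (EReal.coe_toReal htop (hbot y)).symm
        set b := (f y).toReal with hbdef
        rw [hb, ← EReal.coe_sub]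
        rw [EReal.coe_nonneg]
        have hyv : y = x + (y - x) := by abel
        have hXv : f (x + (y-x)) - f x - ((⟪ξ, y-x⟫ : ℝ) : EReal)
            = ((b - a - ⟪ξ, y-x⟫ : ℝ) : EReal) := by
          rw [← hyv, hb, hfx, ← EReal.coe_sub, ← EReal.coe_sub]
        have hwv : w (y-x) ≤ b - a - ⟪ξ, y-x⟫ := by
          rw [hwdef]
          simp only [hXv, EReal.toReal_coe]
          exact min_le_right _ _
        have hρv : -w (y-x) ≤ ρ ‖y-x‖ := hle (y-x) hy
        have hΦv : ρ ‖y-x‖ ≤ Φ (y-x) := hΦlb (y-x)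
        have hgy : g y = a + ⟪ξ, y-x⟫ - Φ (y-x) := by
          rw [hgdef]
          simp
        rw [hgy]
        linarith
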